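/- (Mean square consensus from ergodicity) Suppose x̄(t+1) = M(t)x̄(t) + H(t)v(t) in ℝ^{n̄×d}, where the backward products Ψ_{t,s} = M(t-1)···M(s) converge as t → ∞ to matrices with identical rows (strong ergodicity holds uniformly), 0 ≤ H(t) ≤ M(t) entrywise, and v(t) are independent zero-mean noises with covariance λ²υ^{2t}I_d per row, 0 < υ < 1. Then for any two agents i, j, lim_{t→∞} E[‖x_i(t) - x_j(t)‖₂²] = 0. -/

import Mathlib

open MeasureTheory ProbabilityTheory Filter
open scoped Matrix

section Aux

variable {Ω : Type*} [MeasureSpace Ω] {P : Measure Ω}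

private lemma nu_toLp_norm {f : Ω → ℝ} (hf : MemLp f 2 P) :
    ‖hf.toLp f‖ = Real.sqrt (∫ ω, (f ω) ^ 2 ∂P) := by
  have h1 : ‖hf.toLp f‖ ^ 2 = ∫ ω, (f ω) ^ 2 ∂P := by
    rw [← real_inner_self_eq_norm_sq, MeasureTheory.L2.inner_def]
    refine integral_congr_ae ?_
    filter_upwards [hf.coeFn_toLp] with ω hω
    simp [hω, RCLike.inner_apply, sq]
  rw [← h1, Real.sqrt_sq (norm_nonneg _)]

private lemma nu_add_le {f g : Ω → ℝ} (hf : MemLp f 2 P) (hg : MemLp g 2 P) :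
    Real.sqrt (∫ ω, (f ω + g ω) ^ 2 ∂P)
      ≤ Real.sqrt (∫ ω, (f ω) ^ 2 ∂P) + Real.sqrt (∫ ω, (g ω) ^ 2 ∂P) := by
  calc Real.sqrt (∫ ω, (f ω + g ω) ^ 2 ∂P)
      = ‖(hf.add hg).toLp (f + g)‖ := (nu_toLp_norm (hf.add hg)).symm
    _ = ‖hf.toLp f + hg.toLp g‖ := by rw [MemLp.toLp_add]
    _ ≤ ‖hf.toLp f‖ + ‖hg.toLp g‖ := norm_add_le _ _
    _ = _ := by rw [nu_toLp_norm hf, nu_toLp_norm hg]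

private lemma nu_sum_le {ι : Type*} (s : Finset ι) (f : ι → Ω → ℝ)
    (hf : ∀ m ∈ s, MemLp (f m) 2 P) :
    Real.sqrt (∫ ω, (∑ m ∈ s, f m ω) ^ 2 ∂P)
      ≤ ∑ m ∈ s, Real.sqrt (∫ ω, (f m ω) ^ 2 ∂P) := by
  induction s using Finset.cons_induction with
  | empty => simp
  | cons a s ha ih =>
    simp only [Finset.sum_cons]
    have h1 : MemLp (f a) 2 P := hf a (Finset.mem_cons_self a s)
    have h2 : MemLp (fun ω => ∑ m ∈ s, f m ω) 2 P :=
      memLp_finset_sum s fun m hm => hf m (Finset.mem_cons_of_mem hm)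
    calc Real.sqrt (∫ ω, (f a ω + ∑ m ∈ s, f m ω) ^ 2 ∂P)
        ≤ Real.sqrt (∫ ω, (f a ω) ^ 2 ∂P)
            + Real.sqrt (∫ ω, (∑ m ∈ s, f m ω) ^ 2 ∂P) := nu_add_le h1 h2
      _ ≤ _ := add_le_add_right (ih fun m hm => hf m (Finset.mem_cons_of_mem hm)) _

private lemma nu_const_mul (c : ℝ) (f : Ω → ℝ) :
    Real.sqrt (∫ ω, (c * f ω) ^ 2 ∂P) = |c| * Real.sqrt (∫ ω, (f ω) ^ 2 ∂P) := by
  simp_rw [mul_pow, ← smul_eq_mul (a := c ^ 2), integral_smul, smul_eq_mul]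
  rw [Real.sqrt_mul (sq_nonneg c), Real.sqrt_sq_eq_abs]

private lemma tendsto_sum_range_zero (f : ℕ → ℕ → ℝ) (g : ℕ → ℝ)
    (hf0 : ∀ t s, s < t → 0 ≤ f t s)
    (hfg : ∀ t s, s < t → f t s ≤ g s)
    (hg : Summable g)
    (hlim : ∀ s, Tendsto (fun t => f t s) atTop (nhds 0)) :
    Tendsto (fun t => ∑ s ∈ Finset.range t, f t s) atTop (nhds 0) := by
  have hg0 : ∀ s, 0 ≤ g s := fun s =>
    le_trans (hf0 (s + 1) s (Nat.lt_succ_self s)) (hfg (s + 1) s (Nat.lt_succ_self s))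
  rw [Metric.tendsto_atTop]
  intro ε hε
  have htail := tendsto_sum_nat_add g
  rw [Metric.tendsto_atTop] at htail
  obtain ⟨S, hS⟩ := htail (ε / 2) (by linarith)
  have hhead : Tendsto (fun t => ∑ s ∈ Finset.range S, f t s) atTop (nhds 0) := by
    have h := tendsto_finset_sum (Finset.range S) (fun s _ => hlim s)
    simpa using h
  rw [Metric.tendsto_atTop] at hhead
  obtain ⟨T, hT⟩ := hhead (ε / 2) (by linarith)
  refine ⟨max S T, fun t ht => ?_⟩
  have hSt : S ≤ t := le_trans (le_max_left _ _) ht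
  have hTt : T ≤ t := le_trans (le_max_right _ _) ht
  have hsplit : ∑ s ∈ Finset.range t, f t s
      = ∑ s ∈ Finset.range S, f t s + ∑ s ∈ Finset.Ico S t, f t s := by
    exact (Finset.sum_range_add_sum_Ico (fun s => f t s) hSt).symm
  have htail2 : ∑ s ∈ Finset.Ico S t, f t s ≤ ε / 2 := by
    have h1 : ∑ s ∈ Finset.Ico S t, f t s ≤ ∑ s ∈ Finset.Ico S t, g s :=
      Finset.sum_le_sum fun s hs => hfg t s (Finset.mem_Ico.mp hs).2
    have h2 : ∑ s ∈ Finset.Ico S t, g s = ∑ k ∈ Finset.range (t - S), g (S + k) :=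
      Finset.sum_Ico_eq_sum_range g S t
    have hsum : Summable (fun k => g (k + S)) := (summable_nat_add_iff S).mpr hg
    have h3 : ∑ k ∈ Finset.range (t - S), g (S + k) ≤ ∑' k, g (k + S) := by
      calc ∑ k ∈ Finset.range (t - S), g (S + k)
          = ∑ k ∈ Finset.range (t - S), g (k + S) :=
            Finset.sum_congr rfl fun k _ => by rw [Nat.add_comm]
        _ ≤ ∑' k, g (k + S) := Summable.sum_le_tsum _ (fun k _ => hg0 (k + S)) hsum
    have h4 : ∑' k, g (k + S) ≤ ε / 2 := by
      have h5 := hS S le_rfl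
      rw [Real.dist_eq, sub_zero] at h5
      exact le_of_lt (lt_of_le_of_lt (le_abs_self _) h5)
    linarith
  have hhead2 : |∑ s ∈ Finset.range S, f t s| < ε / 2 := by
    have h := hT t hTt; rwa [Real.dist_eq, sub_zero] at h
  rw [Real.dist_eq, sub_zero]
  have hpos : 0 ≤ ∑ s ∈ Finset.range t, f t s :=
    Finset.sum_nonneg fun s hs => hf0 t s (Finset.mem_range.mp hs)
  rw [abs_of_nonneg hpos, hsplit]
  have := le_of_abs_le (le_of_lt hhead2)
  have := le_abs_self (∑ s ∈ Finset.range S, f t s)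
  linarith

end Aux

/-- Mean square consensus from strong ergodicity of the backward products. -/
theorem mean_square_consensus_from_ergodicity
    {Ω : Type*} [MeasureSpace Ω] (P : Measure Ω) [IsProbabilityMeasure P]
    (n d : ℕ)
    (M H : ℕ → Matrix (Fin n) (Fin n) ℝ)
    (hM_nonneg : ∀ t i j, 0 ≤ M t i j)
    (hM_rowsum : ∀ t i, ∑ j, M t i j = 1)
    (hH : ∀ t i j, 0 ≤ H t i j ∧ H t i j ≤ M t i j)
    (Ψ : ℕ → ℕ → Matrix (Fin n) (Fin n) ℝ)
    (hΨdiag : ∀ s, Ψ s s = 1)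
    (hΨsucc : ∀ t s, Ψ (t + 1) s = M t * Ψ t s)
    (herg : ∀ s, ∃ ψ : Fin n → ℝ, ∀ i j,
      Tendsto (fun t => Ψ t s i j) atTop (nhds (ψ j)))
    (lam υ : ℝ) (hlam : 0 < lam) (hυ0 : 0 < υ) (hυ1 : υ < 1)
    (x : ℕ → Ω → Fin n → Fin d → ℝ)
    (v : ℕ → Ω → Fin n → Fin d → ℝ)
    (hv_meas : ∀ t, Measurable (v t))
    (hv_L2 : ∀ t i k, MemLp (fun ω => v t ω i k) 2 P)
    (hv_mean : ∀ t i k, ∫ ω, v t ω i k ∂P = 0)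
    (hv_cov : ∀ t i k k', ∫ ω, v t ω i k * v t ω i k' ∂P
        = if k = k' then lam ^ 2 * υ ^ (2 * t) else 0)
    (hv_indep : iIndepFun v P)
    (hupd : ∀ t ω i k,
      x (t + 1) ω i k = ∑ j, M t i j * x t ω j k + ∑ j, H t i j * v t ω j k)
    (hx_L2 : ∀ t i k, MemLp (fun ω => x t ω i k) 2 P)
    (i j : Fin n) :
    Tendsto (fun t => ∫ ω, ∑ k, (x t ω i k - x t ω j k) ^ 2 ∂P) atTop (nhds 0) := by
  -- backward products are row-stochastic
  have hΨstoch : ∀ s t, s ≤ t →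
      (∀ p q, 0 ≤ Ψ t s p q) ∧ (∀ p, ∑ q, Ψ t s p q = 1) := by
    intro s t h
    induction t, h using Nat.le_induction with
    | base =>
      constructor
      · intro p q
        rw [hΨdiag]
        by_cases hpq : p = q <;> simp [Matrix.one_apply, hpq]
      · intro p
        simp [hΨdiag, Matrix.one_apply]
    | succ t ht ih =>
      constructor
      · intro p q
        rw [hΨsucc, Matrix.mul_apply]
        exact Finset.sum_nonneg fun r _ => mul_nonneg (hM_nonneg t p r) (ih.1 r q)
      · intro p
        simp_rw [hΨsucc, Matrix.mul_apply]
        rw [Finset.sum_comm]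
        simp_rw [← Finset.mul_sum, ih.2, mul_one]
        exact hM_rowsum t p
  have hM_le_one : ∀ t p q, M t p q ≤ 1 := by
    intro t p q
    calc M t p q ≤ ∑ q', M t p q' :=
          Finset.single_le_sum (fun q' _ => hM_nonneg t p q') (Finset.mem_univ q)
      _ = 1 := hM_rowsum t p
  -- entries of Ψ t (s+1) * H s are in [0,1] when s+1 ≤ t
  have hΨH : ∀ s t, s + 1 ≤ t → ∀ p q,
      0 ≤ (Ψ t (s + 1) * H s) p q ∧ (Ψ t (s + 1) * H s) p q ≤ 1 := by
    intro s t hst p q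
    obtain ⟨h0, h1⟩ := hΨstoch (s + 1) t hst
    constructor
    · rw [Matrix.mul_apply]
      exact Finset.sum_nonneg fun r _ => mul_nonneg (h0 p r) (hH s r q).1
    · rw [Matrix.mul_apply]
      calc ∑ r, Ψ t (s + 1) p r * H s r q ≤ ∑ r, Ψ t (s + 1) p r * 1 :=
            Finset.sum_le_sum fun r _ =>
              mul_le_mul_of_nonneg_left
                (le_trans (hH s r q).2 (hM_le_one s r q)) (h0 p r)
        _ = 1 := by simp [h1 p]
  -- explicit representation of the state
  have hrepv : ∀ t ω k, (fun p => x t ω p k)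
      = Ψ t 0 *ᵥ (fun q => x 0 ω q k)
        + ∑ s ∈ Finset.range t, (Ψ t (s + 1) * H s) *ᵥ (fun q => v s ω q k) := by
    intro t
    induction t with
    | zero =>
      intro ω k
      simp [hΨdiag 0]
    | succ t ih =>
      intro ω k
      have hstep : (fun p => x (t + 1) ω p k)
          = M t *ᵥ (fun p => x t ω p k) + H t *ᵥ (fun q => v t ω q k) := by
        funext p
        simp [hupd t ω p k, Matrix.mulVec, dotProduct]
      have hsum : M t *ᵥ (∑ s ∈ Finset.range t,
            (Ψ t (s + 1) * H s) *ᵥ (fun q => v s ω q k))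
          = ∑ s ∈ Finset.range t,
            M t *ᵥ ((Ψ t (s + 1) * H s) *ᵥ (fun q => v s ω q k)) := by
        simp_rw [← Matrix.mulVecLin_apply]
        exact map_sum (Matrix.mulVecLin (M t)) _ _
      rw [hstep, ih ω k, Matrix.mulVec_add, hsum]
      simp_rw [Matrix.mulVec_mulVec, ← Matrix.mul_assoc, ← hΨsucc]
      rw [Finset.sum_range_succ, hΨdiag, ← add_assoc]
      congr 1
      rw [Matrix.one_mul]
  have hrep : ∀ t ω k p, x t ω p k
      = (∑ q, Ψ t 0 p q * x 0 ω q k)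
        + ∑ s ∈ Finset.range t, ∑ q, (Ψ t (s + 1) * H s) p q * v s ω q k := by
    intro t ω k p
    have h := congrFun (hrepv t ω k) p
    simpa [Matrix.mulVec, dotProduct, Finset.sum_apply] using h
  -- difference of two rows
  have hD : ∀ t k ω, x t ω i k - x t ω j k
      = (∑ q, (Ψ t 0 i q - Ψ t 0 j q) * x 0 ω q k)
        + ∑ s ∈ Finset.range t, ∑ q,
            ((Ψ t (s + 1) * H s) i q - (Ψ t (s + 1) * H s) j q) * v s ω q k := by
    intro t k ω
    rw [hrep t ω k i, hrep t ω k j]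
    simp only [sub_mul, Finset.sum_sub_distrib]
    ring
  -- L² norm of the noise coordinates
  have hν_v : ∀ s (q : Fin n) (k : Fin d),
      Real.sqrt (∫ ω, (v s ω q k) ^ 2 ∂P) = lam * υ ^ s := by
    intro s q k
    have h := hv_cov s q k k
    rw [if_pos rfl] at h
    have h2 : ∫ ω, (v s ω q k) ^ 2 ∂P = (lam * υ ^ s) ^ 2 := by
      simp_rw [sq]
      rw [h, mul_mul_mul_comm]
      congr 1
      · rw [← sq]
      · rw [← pow_add, ← two_mul]
    rw [h2, Real.sqrt_sq (mul_nonneg hlam.le (pow_nonneg hυ0.le s))]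
  -- bound on the L² norm of the difference
  set C : Fin n → Fin d → ℝ :=
    fun q k => Real.sqrt (∫ ω, (x 0 ω q k) ^ 2 ∂P) with hC
  set B : ℕ → Fin d → ℝ := fun t k =>
      (∑ q, |Ψ t 0 i q - Ψ t 0 j q| * C q k)
        + ∑ s ∈ Finset.range t, ∑ q,
            |(Ψ t (s + 1) * H s) i q - (Ψ t (s + 1) * H s) j q| * (lam * υ ^ s)
    with hB
  have hbound : ∀ t k,
      Real.sqrt (∫ ω, (x t ω i k - x t ω j k) ^ 2 ∂P) ≤ B t k := by
    intro t k
    have heq : (∫ ω, (x t ω i k - x t ω j k) ^ 2 ∂P)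
        = ∫ ω, ((∑ q, (Ψ t 0 i q - Ψ t 0 j q) * x 0 ω q k)
            + ∑ s ∈ Finset.range t, ∑ q,
                ((Ψ t (s + 1) * H s) i q - (Ψ t (s + 1) * H s) j q) * v s ω q k) ^ 2
            ∂P := by
      exact integral_congr_ae (Filter.Eventually.of_forall fun ω =>
        congrArg (fun y => y ^ 2) (hD t k ω))
    rw [heq]
    have hA : MemLp (fun ω => ∑ q, (Ψ t 0 i q - Ψ t 0 j q) * x 0 ω q k) 2 P :=
      memLp_finset_sum _ fun q _ => (hx_L2 0 q k).const_mul _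
    have hBm : MemLp (fun ω => ∑ s ∈ Finset.range t, ∑ q,
        ((Ψ t (s + 1) * H s) i q - (Ψ t (s + 1) * H s) j q) * v s ω q k) 2 P :=
      memLp_finset_sum _ fun s _ =>
        memLp_finset_sum _ fun q _ => (hv_L2 s q k).const_mul _
    calc Real.sqrt (∫ ω, ((∑ q, (Ψ t 0 i q - Ψ t 0 j q) * x 0 ω q k)
            + ∑ s ∈ Finset.range t, ∑ q,
                ((Ψ t (s + 1) * H s) i q - (Ψ t (s + 1) * H s) j q) * v s ω q k) ^ 2
            ∂P)
        ≤ Real.sqrt (∫ ω, (∑ q, (Ψ t 0 i q - Ψ t 0 j q) * x 0 ω q k) ^ 2 ∂P)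
          + Real.sqrt (∫ ω, (∑ s ∈ Finset.range t, ∑ q,
              ((Ψ t (s + 1) * H s) i q - (Ψ t (s + 1) * H s) j q) * v s ω q k) ^ 2
              ∂P) := nu_add_le hA hBm
      _ ≤ B t k := by
          rw [hB]
          refine add_le_add ?_ ?_
          · calc Real.sqrt (∫ ω, (∑ q, (Ψ t 0 i q - Ψ t 0 j q) * x 0 ω q k) ^ 2 ∂P)
                ≤ ∑ q, Real.sqrt (∫ ω, ((Ψ t 0 i q - Ψ t 0 j q) * x 0 ω q k) ^ 2 ∂P) :=
                  nu_sum_le _ _ fun q _ => (hx_L2 0 q k).const_mul _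
              _ = ∑ q, |Ψ t 0 i q - Ψ t 0 j q| * C q k := by
                  refine Finset.sum_congr rfl fun q _ => ?_
                  rw [nu_const_mul, hC]
          · calc Real.sqrt (∫ ω, (∑ s ∈ Finset.range t, ∑ q,
                  ((Ψ t (s + 1) * H s) i q - (Ψ t (s + 1) * H s) j q)
                    * v s ω q k) ^ 2 ∂P)
                ≤ ∑ s ∈ Finset.range t, Real.sqrt (∫ ω, (∑ q,
                    ((Ψ t (s + 1) * H s) i q - (Ψ t (s + 1) * H s) j q)
                      * v s ω q k) ^ 2 ∂P) :=
                  nu_sum_le _ _ fun s _ =>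
                    memLp_finset_sum _ fun q _ => (hv_L2 s q k).const_mul _
              _ ≤ ∑ s ∈ Finset.range t, ∑ q,
                    |(Ψ t (s + 1) * H s) i q - (Ψ t (s + 1) * H s) j q|
                      * (lam * υ ^ s) := by
                  refine Finset.sum_le_sum fun s _ => ?_
                  calc Real.sqrt (∫ ω, (∑ q,
                        ((Ψ t (s + 1) * H s) i q - (Ψ t (s + 1) * H s) j q)
                          * v s ω q k) ^ 2 ∂P)
                      ≤ ∑ q, Real.sqrt (∫ ω,
                          (((Ψ t (s + 1) * H s) i q - (Ψ t (s + 1) * H s) j q)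
                            * v s ω q k) ^ 2 ∂P) :=
                        nu_sum_le _ _ fun q _ => (hv_L2 s q k).const_mul _
                    _ = ∑ q, |(Ψ t (s + 1) * H s) i q - (Ψ t (s + 1) * H s) j q|
                          * (lam * υ ^ s) := by
                        refine Finset.sum_congr rfl fun q _ => ?_
                        rw [nu_const_mul, hν_v]
  -- B tends to zero
  have hBtend : ∀ k, Tendsto (fun t => B t k) atTop (nhds 0) := by
    intro k
    have hpart1 : Tendsto (fun t => ∑ q, |Ψ t 0 i q - Ψ t 0 j q| * C q k)
        atTop (nhds 0) := by
      obtain ⟨ψ0, hψ0⟩ := herg 0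
      have h : ∀ q : Fin n, Tendsto (fun t => |Ψ t 0 i q - Ψ t 0 j q| * C q k)
          atTop (nhds 0) := by
        intro q
        have h1 := (hψ0 i q).sub (hψ0 j q)
        rw [sub_self] at h1
        have h2 := h1.abs
        rw [abs_zero] at h2
        have h3 := h2.mul_const (C q k)
        simpa using h3
      have h4 := tendsto_finset_sum Finset.univ (fun q _ => h q)
      simpa using h4
    have hpart2 : Tendsto (fun t => ∑ s ∈ Finset.range t, ∑ q,
        |(Ψ t (s + 1) * H s) i q - (Ψ t (s + 1) * H s) j q| * (lam * υ ^ s))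
        atTop (nhds 0) := by
      apply tendsto_sum_range_zero
        (g := fun s => (n : ℝ) * (2 * (lam * υ ^ s)))
      · intro t s hst
        exact Finset.sum_nonneg fun q _ =>
          mul_nonneg (abs_nonneg _) (mul_nonneg hlam.le (pow_nonneg hυ0.le s))
      · intro t s hst
        have hle : ∀ q : Fin n,
            |(Ψ t (s + 1) * H s) i q - (Ψ t (s + 1) * H s) j q| ≤ 2 := by
          intro q
          have hi := hΨH s t hst i q
          have hj := hΨH s t hst j q
          rw [abs_sub_le_iff]
          constructor <;> nlinarith [hi.1, hi.2, hj.1, hj.2]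
        calc ∑ q, |(Ψ t (s + 1) * H s) i q - (Ψ t (s + 1) * H s) j q|
              * (lam * υ ^ s)
            ≤ ∑ _q : Fin n, 2 * (lam * υ ^ s) :=
              Finset.sum_le_sum fun q _ =>
                mul_le_mul_of_nonneg_right (hle q)
                  (mul_nonneg hlam.le (pow_nonneg hυ0.le s))
          _ = (n : ℝ) * (2 * (lam * υ ^ s)) := by
              rw [Finset.sum_const, Finset.card_univ, Fintype.card_fin,
                nsmul_eq_mul]
      · have hgeo : Summable (fun s : ℕ => υ ^ s) :=
          summable_geometric_of_lt_one hυ0.le hυ1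
        have h := (hgeo.mul_left ((n : ℝ) * (2 * lam)))
        refine h.congr fun s => ?_
        ring
      · intro s
        obtain ⟨ψs, hψs⟩ := herg (s + 1)
        have h : ∀ q : Fin n, Tendsto
            (fun t => |(Ψ t (s + 1) * H s) i q - (Ψ t (s + 1) * H s) j q|
              * (lam * υ ^ s)) atTop (nhds 0) := by
          intro q
          have hiq : Tendsto (fun t => (Ψ t (s + 1) * H s) i q) atTop
              (nhds (∑ r, ψs r * H s r q)) := by
            simp_rw [Matrix.mul_apply]
            exact tendsto_finset_sum _ fun r _ => (hψs i r).mul_const _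
          have hjq : Tendsto (fun t => (Ψ t (s + 1) * H s) j q) atTop
              (nhds (∑ r, ψs r * H s r q)) := by
            simp_rw [Matrix.mul_apply]
            exact tendsto_finset_sum _ fun r _ => (hψs j r).mul_const _
          have h1 := hiq.sub hjq
          rw [sub_self] at h1
          have h2 := h1.abs
          rw [abs_zero] at h2
          have h3 := h2.mul_const (lam * υ ^ s)
          simpa using h3
        have h4 := tendsto_finset_sum Finset.univ (fun q _ => h q)
        simpa using h4
    have h := hpart1.add hpart2
    rw [add_zero] at h
    exact h
  -- per-coordinate convergence of the second moment
  have hcoord : ∀ k : Fin d,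
      Tendsto (fun t => ∫ ω, (x t ω i k - x t ω j k) ^ 2 ∂P) atTop (nhds 0) := by
    intro k
    have hsq : Tendsto
        (fun t => Real.sqrt (∫ ω, (x t ω i k - x t ω j k) ^ 2 ∂P))
        atTop (nhds 0) :=
      squeeze_zero (fun t => Real.sqrt_nonneg _) (fun t => hbound t k) (hBtend k)
    have h2 := hsq.pow 2
    rw [pow_two, mul_zero] at h2
    refine h2.congr fun t => ?_
    rw [Real.sq_sqrt (integral_nonneg fun ω => sq_nonneg _)]
  -- put the coordinates together
  have hsum : ∀ t, ∫ ω, ∑ k, (x t ω i k - x t ω j k) ^ 2 ∂P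
      = ∑ k, ∫ ω, (x t ω i k - x t ω j k) ^ 2 ∂P := by
    intro t
    exact integral_finset_sum _ fun k _ =>
      ((hx_L2 t i k).sub (hx_L2 t j k)).integrable_sq
  have h := tendsto_finset_sum Finset.univ (fun k (_ : k ∈ Finset.univ) => hcoord k)
  rw [Finset.sum_const, smul_zero] at h
  exact Tendsto.congr (fun t => (hsum t).symm) h
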